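/- INV(π) equals the total count of occurrences of the vincular patterns \underline{21} + 3\underline{12} + 3\underline{21} + 2\underline{31} in π, for every permutation π. -/

import Mathlib

/-- Value of the word `l` at 1-based position `i` (0 if out of range). -/
def wv (l : List ℕ) (i : ℕ) : ℕ := l.getD (i - 1) 0

/-- Descent set (1-based positions `i < n` with `wᵢ > wᵢ₊₁`). -/
def DSet (l : List ℕ) : Finset ℕ :=
  (Finset.Ico 1 l.length).filter fun i => wv l (i + 1) < wv l i

def des (l : List ℕ) : ℕ := (DSet l).card

def MAJ (l : List ℕ) : ℕ := ∑ i ∈ DSet l, i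

/-- First letter. -/
def Fst (l : List ℕ) : ℕ := wv l 1

/-- Number of triples (i, i+1, j) with i+1 < j ≤ n satisfying the pattern
condition `p a b c` where a = wᵢ, b = wᵢ₊₁, c = wⱼ. -/
def tripCount (l : List ℕ) (p : ℕ → ℕ → ℕ → Bool) : ℕ :=
  (((Finset.Ico 1 l.length) ×ˢ (Finset.Icc 1 l.length)).filter
    (fun q => q.1 + 1 < q.2 ∧ p (wv l q.1) (wv l (q.1 + 1)) (wv l q.2) = true)).card

/-- Number of triples (i, j, j+1) with i < j, j+1 ≤ n satisfying
`p a b c` where a = wᵢ, b = wⱼ, c = wⱼ₊₁. -/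
def tripCount2 (l : List ℕ) (p : ℕ → ℕ → ℕ → Bool) : ℕ :=
  (((Finset.Icc 1 l.length) ×ˢ (Finset.Ico 1 l.length)).filter
    (fun q => q.1 < q.2 ∧ p (wv l q.1) (wv l q.2) (wv l (q.2 + 1)) = true)).card

/-- STAT on permutations: occurrences of 21 + 132 + 213 + 321 (first two letters adjacent). -/
def STATp (l : List ℕ) : ℕ :=
  des l + tripCount l (fun a b c =>
    decide ((a < c ∧ c < b) ∨ (b < a ∧ a < c) ∨ (c < b ∧ b < a)))

/-- STAT on words: occurrences of 213 + 212 + 132 + 121 + 321 + 21 (first two letters adjacent). -/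
def STATw (l : List ℕ) : ℕ :=
  des l + tripCount l (fun a b c =>
    decide ((b < a ∧ a < c) ∨ (b < a ∧ a = c) ∨ (a < c ∧ c < b) ∨
            (a = c ∧ c < b) ∨ (c < b ∧ b < a)))

/-- Standardization (coding map) of a word. -/
def stdz (l : List ℕ) : List ℕ :=
  (List.range l.length).map fun i =>
    ((List.range l.length).filter fun j =>
      decide (l.getD j 0 < l.getD i 0 ∨ (l.getD j 0 = l.getD i 0 ∧ j ≤ i))).length

/-- Inverse descent set: values v of the standardization such that v+1 occurs before v. -/
def IdSet (l : List ℕ) : Finset ℕ :=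
  (Finset.Icc 1 l.length).filter fun v =>
    ∃ i ∈ Finset.range l.length, ∃ j ∈ Finset.range l.length,
      j < i ∧ (stdz l).getD i 0 = v ∧ (stdz l).getD j 0 = v + 1

def ides (l : List ℕ) : ℕ := (IdSet l).card

def IMAJ (l : List ℕ) : ℕ := ∑ i ∈ IdSet l, i

/-- `l` is a permutation of {1, …, n} written in one-line notation. -/
def IsPermList (l : List ℕ) : Prop := l.Perm (List.range' 1 l.length)

def INV (l : List ℕ) : ℕ :=
  (((Finset.Icc 1 l.length) ×ˢ (Finset.Icc 1 l.length)).filter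
    (fun q => q.1 < q.2 ∧ wv l q.2 < wv l q.1)).card

/-- INV equals the number of occurrences of the vincular patterns
21 + 3(12) + 3(21) + 2(31) (adjacency on the last two letters). -/
theorem stmt18 (l : List ℕ) (hperm : IsPermList l) :
    INV l = des l + tripCount2 l (fun a b c =>
      decide ((b < c ∧ c < a) ∨ (c < b ∧ b < a) ∨ (c < a ∧ a < b))) := by
  classical
  have hnd : l.Nodup := hperm.nodup_iff.mpr (by simpa using List.nodup_range' (s := 1) (n := l.length))
  have hinj : ∀ i j : ℕ, 1 ≤ i → i ≤ l.length → 1 ≤ j → j ≤ l.length →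
      wv l i = wv l j → i = j := by
    intro i j hi1 hi2 hj1 hj2 h
    have hi' : i - 1 < l.length := by omega
    have hj' : j - 1 < l.length := by omega
    unfold wv at h
    rw [List.getD_eq_getElem l 0 hi', List.getD_eq_getElem l 0 hj'] at h
    have := (List.Nodup.getElem_inj_iff hnd).mp h
    omega
  unfold INV
  rw [← Finset.card_filter_add_card_filter_not
    (p := fun q : ℕ × ℕ => q.2 = q.1 + 1)]
  congr 1
  · -- descents part
    unfold des DSet
    apply Finset.card_nbij' (i := fun q => q.1) (j := fun i => (i, i + 1))
    · intro q hq
      simp only [Finset.mem_coe, Finset.mem_filter, Finset.mem_product, Finset.mem_Icc] at hq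
      simp only [Finset.mem_coe, Finset.mem_filter, Finset.mem_Ico]
      obtain ⟨⟨⟨⟨h1, h2⟩, h3, h4⟩, h5, h6⟩, h7⟩ := hq
      refine ⟨⟨h1, by omega⟩, ?_⟩
      rw [← h7]; exact h6
    · intro i hi
      simp only [Finset.mem_coe, Finset.mem_filter, Finset.mem_Ico] at hi
      simp only [Finset.mem_coe, Finset.mem_filter, Finset.mem_product, Finset.mem_Icc]
      obtain ⟨⟨h1, h2⟩, h3⟩ := hi
      exact ⟨⟨⟨⟨h1, by omega⟩, by omega, by omega⟩, by omega, h3⟩, trivial⟩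
    · intro q hq
      simp only [Finset.mem_coe, Finset.mem_filter] at hq
      ext <;> simp [hq.2]
    · intro i _; rfl
  · -- triple part
    unfold tripCount2
    apply Finset.card_nbij' (i := fun q => (q.1, q.2 - 1)) (j := fun q => (q.1, q.2 + 1))
    · intro q hq
      simp only [Finset.mem_coe, Finset.mem_filter, Finset.mem_product, Finset.mem_Icc] at hq
      simp only [Finset.mem_coe, Finset.mem_filter, Finset.mem_product, Finset.mem_Icc, Finset.mem_Ico,
        decide_eq_true_eq]
      obtain ⟨⟨⟨⟨h1, h2⟩, h3, h4⟩, h5, h6⟩, h7⟩ := hq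
      have hk2 : q.1 + 2 ≤ q.2 := by omega
      have heq : q.2 - 1 + 1 = q.2 := by omega
      refine ⟨⟨⟨h1, h2⟩, by omega, by omega⟩, by omega, ?_⟩
      rw [heq]
      -- a = wv l q.1, b = wv l (q.2 - 1), c = wv l q.2, know c < a
      have hba : wv l (q.2 - 1) ≠ wv l q.1 := fun h =>
        by have := hinj _ _ (by omega) (by omega) h1 h2 h; omega
      have hbc : wv l (q.2 - 1) ≠ wv l q.2 := fun h =>
        by have := hinj _ _ (by omega) (by omega) h3 h4 h; omega
      rcases lt_trichotomy (wv l (q.2 - 1)) (wv l q.2) with hblt | hbe | hbgt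
      · exact Or.inl ⟨hblt, h6⟩
      · exact absurd hbe hbc
      · rcases lt_trichotomy (wv l (q.2 - 1)) (wv l q.1) with h' | h' | h'
        · exact Or.inr (Or.inl ⟨hbgt, h'⟩)
        · exact absurd h' hba
        · exact Or.inr (Or.inr ⟨h6, h'⟩)
    · intro q hq
      simp only [Finset.mem_coe, Finset.mem_filter, Finset.mem_product, Finset.mem_Icc, Finset.mem_Ico,
        decide_eq_true_eq] at hq
      simp only [Finset.mem_coe, Finset.mem_filter, Finset.mem_product, Finset.mem_Icc]
      obtain ⟨⟨⟨h1, h2⟩, h3, h4⟩, h5, h6⟩ := hq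
      refine ⟨⟨⟨⟨h1, h2⟩, by omega, by omega⟩, by omega, ?_⟩, by omega⟩
      rcases h6 with ⟨_, h⟩ | ⟨h', h⟩ | ⟨h, _⟩
      · exact h
      · exact h'.trans h
      · exact h
    · intro q hq
      simp only [Finset.mem_coe, Finset.mem_filter, Finset.mem_product, Finset.mem_Icc] at hq
      have : q.2 - 1 + 1 = q.2 := by omega
      ext <;> simp [this]
    · intro q _
      ext <;> simp
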